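/- Let G be a randomly 3-dimensional graph of order n. Then every vertex u of G satisfies Σ_{i=1}^{ecc(u)} C(|N_i(u)|, 2) = n − 1, where C(m,2) denotes the binomial coefficient m choose 2. -/

import Mathlib

/-- `S` is a resolving set of `G`: every pair of distinct vertices is resolved
by some vertex of `S`, i.e. some `u ∈ S` has different distances to the two vertices. -/
def IsResolvingSet {V : Type*} (G : SimpleGraph V) (S : Set V) : Prop :=
  ∀ x y : V, x ≠ y → ∃ u ∈ S, G.dist u x ≠ G.dist u y

/-- The metric dimension of `G`: minimum size of a resolving set. -/
noncomputable def metricDim {V : Type*} [Fintype V] (G : SimpleGraph V) : ℕ :=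
  sInf {k | ∃ S : Finset V, S.card = k ∧ IsResolvingSet G ↑S}

/-- The upper dimension of `G`: maximum size of a minimal resolving set. -/
noncomputable def upperDim {V : Type*} [Fintype V] (G : SimpleGraph V) : ℕ :=
  sSup {k | ∃ S : Finset V, S.card = k ∧ IsResolvingSet G ↑S ∧
    ∀ T : Finset V, T ⊂ S → ¬ IsResolvingSet G ↑T}

/-- The resolving number of `G`: minimum `k` such that every `k`-subset of
the vertex set is a resolving set. -/
noncomputable def resolvingNumber {V : Type*} [Fintype V] (G : SimpleGraph V) : ℕ :=
  sInf {k | ∀ S : Finset V, S.card = k → IsResolvingSet G ↑S}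

/-- The set of vertices that do not resolve any pair of elements of `p`. -/
noncomputable def nonResolvers {V : Type*} [Fintype V] [DecidableEq V] (G : SimpleGraph V)
    (p : Finset V) : Finset V :=
  Finset.univ.filter fun w => ∀ x ∈ p, ∀ y ∈ p, G.dist w x = G.dist w y

/-- in a randomly 3-dimensional graph of order `n`, every vertex `u`
satisfies `∑_{i=1}^{ecc(u)} C(|N_i(u)|, 2) = n - 1`, where `N_i(u)` is the set of
vertices at distance `i` from `u` and `ecc(u)` is the eccentricity of `u`. -/
theorem stmt2 {V : Type*} [Fintype V] [DecidableEq V] (G : SimpleGraph V)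
    (hconn : G.Connected) (hdim : metricDim G = 3) (hres : resolvingNumber G = 3)
    (n : ℕ) (hn : Fintype.card V = n) :
    ∀ u : V,
      ∑ i ∈ Finset.Icc 1 (Finset.univ.sup fun v => G.dist u v),
        ((Finset.univ.filter fun v => G.dist u v = i).card).choose 2 = n - 1 := by
  classical
  intro u
  set F := nonResolvers G with hF
  have memF : ∀ (p : Finset V) (w : V),
      w ∈ F p ↔ ∀ x ∈ p, ∀ y ∈ p, G.dist w x = G.dist w y := by
    intro p w
    simp [hF, nonResolvers]
  -- every 3-subset is resolving
  have hresne : {k | ∀ S : Finset V, S.card = k → IsResolvingSet G ↑S}.Nonempty := by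
    by_contra h
    rw [Set.not_nonempty_iff_eq_empty] at h
    unfold resolvingNumber at hres
    rw [h, Nat.sInf_empty] at hres
    exact absurd hres (by norm_num)
  have hres3 : ∀ S : Finset V, S.card = 3 → IsResolvingSet G ↑S := by
    have h := Nat.sInf_mem hresne
    unfold resolvingNumber at hres
    rwa [hres] at h
  -- no 2-subset is resolving
  have hdim2 : ∀ S : Finset V, S.card = 2 → ¬ IsResolvingSet G ↑S := by
    intro S hS hRes
    have h2 : (2:ℕ) ∈ {k | ∃ S : Finset V, S.card = k ∧ IsResolvingSet G ↑S} := ⟨S, hS, hRes⟩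
    have hle := Nat.sInf_le h2
    unfold metricDim at hdim
    omega
  -- Lemma A : non-resolver sets of pairs have at most 2 elements
  have cardF_le : ∀ p : Finset V, p.card = 2 → (F p).card ≤ 2 := by
    intro p hp
    by_contra h
    push_neg at h
    obtain ⟨S, hSsub, hScard⟩ := Finset.exists_subset_card_eq (by omega : 3 ≤ (F p).card)
    obtain ⟨x, y, hxy, rfl⟩ := Finset.card_eq_two.mp hp
    obtain ⟨w, hwS, hw⟩ := hres3 S hScard x y hxy
    have hwF := hSsub (Finset.mem_coe.mp hwS)
    rw [memF] at hwF
    exact hw (hwF x (by simp) y (by simp))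
  -- Lemma B : every 2-set is contained in the non-resolver set of some pair
  have B' : ∀ S : Finset V, ∃ p : Finset V, S.card = 2 → p.card = 2 ∧ S ⊆ F p := by
    intro S
    by_cases hS : S.card = 2
    · have hnr := hdim2 S hS
      unfold IsResolvingSet at hnr
      push_neg at hnr
      obtain ⟨x, y, hxy, hall⟩ := hnr
      refine ⟨{x, y}, fun _ => ⟨Finset.card_pair hxy, ?_⟩⟩
      intro w hw
      rw [memF]
      intro a ha b hb
      have hwx : G.dist w x = G.dist w y := hall w (Finset.mem_coe.mpr hw)
      simp only [Finset.mem_insert, Finset.mem_singleton] at ha hb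
      rcases ha with rfl | rfl <;> rcases hb with rfl | rfl
      · rfl
      · exact hwx
      · exact hwx.symm
      · rfl
    · exact ⟨∅, fun h => absurd h hS⟩
  choose pf hpf using B'
  have hT : ∀ p : Finset V, p ∈ (Finset.univ.powersetCard 2 : Finset (Finset V)) ↔ p.card = 2 := by
    intro p
    rw [Finset.mem_powersetCard]
    exact ⟨fun h => h.2, fun h => ⟨Finset.subset_univ _, h⟩⟩
  -- injectivity of pf
  have hinj0 : ∀ S₁ S₂ : Finset V, S₁.card = 2 → S₂.card = 2 → pf S₁ = pf S₂ → S₁ = S₂ := by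
    intro S₁ S₂ h1 h2 heq
    by_contra hne
    have hsub : S₁ ∪ S₂ ⊆ F (pf S₁) := by
      apply Finset.union_subset (hpf S₁ h1).2
      rw [heq]; exact (hpf S₂ h2).2
    have hcard3 : 3 ≤ (S₁ ∪ S₂).card := by
      rcases Nat.lt_or_ge (S₁ ∪ S₂).card 3 with h | h
      · have e1 : S₁ = S₁ ∪ S₂ :=
          Finset.eq_of_subset_of_card_le Finset.subset_union_left (by omega)
        have e2 : S₂ = S₁ ∪ S₂ :=
          Finset.eq_of_subset_of_card_le Finset.subset_union_right (by omega)
        exact absurd (e1.trans e2.symm) hne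
      · exact h
    have hle := Finset.card_le_card hsub
    have hle2 := cardF_le (pf S₁) (hpf S₁ h1).1
    omega
  -- surjectivity of pf : every pair is pf of some 2-set
  have hsurj : ∀ p : Finset V, p.card = 2 → ∃ S : Finset V, S.card = 2 ∧ pf S = p := by
    intro p hp
    have hs := Finset.surj_on_of_inj_on_of_card_le
      (s := (Finset.univ.powersetCard 2 : Finset (Finset V)))
      (t := (Finset.univ.powersetCard 2 : Finset (Finset V)))
      (fun S _ => pf S)
      (fun S hS => (hT _).mpr (hpf S ((hT _).mp hS)).1)
      (fun S₁ S₂ h1 h2 heq => hinj0 _ _ ((hT _).mp h1) ((hT _).mp h2) heq)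
      le_rfl p ((hT _).mpr hp)
    obtain ⟨S, hS, hpS⟩ := hs
    exact ⟨S, (hT _).mp hS, hpS.symm⟩
  -- Key : for each pair p, F p is a 2-set and pf (F p) = p
  have keyE : ∀ p : Finset V, p.card = 2 → (F p).card = 2 ∧ pf (F p) = p := by
    intro p hp
    obtain ⟨S, hS, hpS⟩ := hsurj p hp
    have hsub : S ⊆ F p := by rw [← hpS]; exact (hpf S hS).2
    have hSF : S = F p :=
      Finset.eq_of_subset_of_card_le hsub (by rw [hS]; exact cardF_le p hp)
    refine ⟨by rw [← hSF, hS], ?_⟩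
    rw [← hSF, hpS]
  have Finj : ∀ p q : Finset V, p.card = 2 → q.card = 2 → F p = F q → p = q := by
    intro p q hp hq h
    have h1 := (keyE p hp).2
    rw [h, (keyE q hq).2] at h1
    exact h1.symm
  have Fsurj : ∀ S : Finset V, S.card = 2 → ∃ p : Finset V, p.card = 2 ∧ F p = S := by
    intro S hS
    refine ⟨pf S, (hpf S hS).1, ?_⟩
    exact (Finset.eq_of_subset_of_card_le (hpf S hS).2
      (by rw [hS]; exact cardF_le _ (hpf S hS).1)).symm
  -- pairs unresolved by u ↔ 2-sets containing u
  set Pu := (Finset.univ.powersetCard 2 : Finset (Finset V)).filter (fun p => u ∈ F p) with hPu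
  set Qu := (Finset.univ.powersetCard 2 : Finset (Finset V)).filter (fun S => u ∈ S) with hQu
  have hPQ : Pu.card = Qu.card := by
    apply Finset.card_bij (fun p _ => F p)
    · intro p hp
      rw [hPu, Finset.mem_filter, hT] at hp
      rw [hQu, Finset.mem_filter, hT]
      exact ⟨(keyE p hp.1).1, hp.2⟩
    · intro p hp q hq h
      rw [hPu, Finset.mem_filter, hT] at hp hq
      exact Finj p q hp.1 hq.1 h
    · intro S hS
      rw [hQu, Finset.mem_filter, hT] at hS
      obtain ⟨p, hp, hFp⟩ := Fsurj S hS.1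
      refine ⟨p, ?_, hFp⟩
      rw [hPu, Finset.mem_filter, hT]
      exact ⟨hp, hFp ▸ hS.2⟩
  have hQcard : Qu.card = n - 1 := by
    have hbij : (Finset.univ.erase u).card = Qu.card := by
      apply Finset.card_bij (fun w _ => ({u, w} : Finset V))
      · intro w hw
        rw [hQu, Finset.mem_filter, hT]
        exact ⟨Finset.card_pair (Ne.symm (Finset.ne_of_mem_erase hw)),
          Finset.mem_insert_self _ _⟩
      · intro w₁ h₁ w₂ h₂ heq
        have hmem : w₁ ∈ ({u, w₂} : Finset V) := by
          rw [← heq]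
          exact Finset.mem_insert_of_mem (Finset.mem_singleton_self _)
        simp only [Finset.mem_insert, Finset.mem_singleton] at hmem
        rcases hmem with h | h
        · exact absurd h (Finset.ne_of_mem_erase h₁)
        · exact h
      · intro S hS
        rw [hQu, Finset.mem_filter, hT] at hS
        obtain ⟨a, b, hab, rfl⟩ := Finset.card_eq_two.mp hS.1
        have hu := hS.2
        simp only [Finset.mem_insert, Finset.mem_singleton] at hu
        rcases hu with rfl | rfl
        · exact ⟨b, Finset.mem_erase.mpr ⟨hab.symm, Finset.mem_univ _⟩, rfl⟩
        · exact ⟨a, Finset.mem_erase.mpr ⟨hab, Finset.mem_univ _⟩, by rw [Finset.pair_comm]⟩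
    rw [← hbij, Finset.card_erase_of_mem (Finset.mem_univ u), Finset.card_univ, hn]
  -- the sum counts exactly the pairs unresolved by u
  have hsum : ∑ i ∈ Finset.Icc 1 (Finset.univ.sup fun v => G.dist u v),
      ((Finset.univ.filter fun v => G.dist u v = i).card).choose 2 = Pu.card := by
    have hrw : ∀ i ∈ Finset.Icc 1 (Finset.univ.sup fun v => G.dist u v),
        ((Finset.univ.filter fun v => G.dist u v = i).card).choose 2
        = (Finset.powersetCard 2 (Finset.univ.filter fun v => G.dist u v = i)).card := by
      intro i _
      rw [Finset.card_powersetCard]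
    rw [Finset.sum_congr rfl hrw, ← Finset.card_biUnion]
    · congr 1
      ext p
      simp only [Finset.mem_biUnion, Finset.mem_Icc, Finset.mem_powersetCard]
      constructor
      · rintro ⟨i, ⟨hi1, _⟩, hsub, hcard⟩
        rw [hPu, Finset.mem_filter, hT]
        refine ⟨hcard, ?_⟩
        rw [memF]
        intro x hx y hy
        have h1 := (Finset.mem_filter.mp (hsub hx)).2
        have h2 := (Finset.mem_filter.mp (hsub hy)).2
        omega
      · intro hp
        rw [hPu, Finset.mem_filter, hT] at hp
        obtain ⟨hcard, huF⟩ := hp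
        rw [memF] at huF
        obtain ⟨x, y, hxy, rfl⟩ := Finset.card_eq_two.mp hcard
        have hd : G.dist u x = G.dist u y := huF x (by simp) y (by simp)
        have hxu : x ≠ u := by
          intro heq
          have h0 : G.dist u x = 0 := by rw [heq]; exact SimpleGraph.dist_self
          rw [h0] at hd
          have := SimpleGraph.dist_eq_zero_iff_eq_or_not_reachable.mp hd.symm
          rcases this with h | h
          · exact hxy (heq.trans h)
          · exact h (hconn.preconnected u y)
        have hpos : G.dist u x ≠ 0 := by
          intro h0
          have := SimpleGraph.dist_eq_zero_iff_eq_or_not_reachable.mp h0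
          rcases this with h | h
          · exact hxu h.symm
          · exact h (hconn.preconnected u x)
        refine ⟨G.dist u x, ⟨by omega, Finset.le_sup (Finset.mem_univ x)⟩, ?_, hcard⟩
        intro v hv
        simp only [Finset.mem_insert, Finset.mem_singleton] at hv
        rw [Finset.mem_filter]
        rcases hv with rfl | rfl
        · exact ⟨Finset.mem_univ _, rfl⟩
        · exact ⟨Finset.mem_univ _, hd.symm⟩
    · -- disjointness
      intro i _ j _ hij
      dsimp only [Function.onFun]
      rw [Finset.disjoint_left]
      intro p hpi hpj
      rw [Finset.mem_powersetCard] at hpi hpj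
      obtain ⟨x, hx⟩ := Finset.card_pos.mp (by omega : 0 < p.card)
      have h1 := (Finset.mem_filter.mp (hpi.1 hx)).2
      have h2 := (Finset.mem_filter.mp (hpj.1 hx)).2
      exact hij (h1 ▸ h2 ▸ rfl)
  rw [hsum, hPQ, hQcard]
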